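/- Let ρ : ℕ → ℕ be a function such that ρ(n)/n is nonincreasing and tends to 0 as n → ∞. Then there exists a set B consisting of prime numbers such that: (i) B is Behrend, i.e. the set F_B of positive integers with no divisor in B has natural density 0; (ii) every B-admissible block appears in the B-free sequence, i.e. for every L ∈ ℕ and every B-admissible set A ⊆ {1,…,L} there exists n ∈ ℕ such that {j ∈ {1,…,L} : n + j ∈ F_B} = A; (iii) limsup_{n→∞} cpx_{1_{F_B}}(n)/2^{ρ(n)} ≥ 1. -/

import Mathlib

open Filter

/-- The number of distinct length-`n` blocks `(y(m+1), …, y(m+n))` occurring in the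
sequence `y`, as `m` ranges over the nonnegative integers. -/
noncomputable def cpx (y : ℕ → Prop) (n : ℕ) : ℕ :=
  Nat.card {w : Fin n → Prop // ∃ m : ℕ, ∀ i : Fin n, w i = y (m + 1 + i)}

/-- `A ⊆ ℤ` is `B`-admissible if for every `b ∈ B` there is a residue class `r` mod `b`
such that no element of `A` is congruent to `r` mod `b`. -/
def IsAdmissible (B : Set ℕ) (A : Set ℤ) : Prop :=
  ∀ b ∈ B, ∃ r : ℤ, ∀ a ∈ A, ¬ ((b : ℤ) ∣ a - r)

/-- `FreeSet B` is the set of `B`-free positive integers: positive integers with no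
divisor in `B`. -/
def FreeSet (B : Set ℕ) : Set ℕ := {n : ℕ | 0 < n ∧ ∀ b ∈ B, ¬ b ∣ n}

namespace BehrendAux

open Finset

instance : Finite Prop := Finite.of_equiv Bool Equiv.propEquivBool.symm

def pIoc (a b : ℕ) : Finset ℕ := (Finset.Ioc a b).filter Nat.Prime

lemma pIoc_prime {a b p : ℕ} (hp : p ∈ pIoc a b) : p.Prime := (Finset.mem_filter.1 hp).2

lemma pIoc_bounds {a b p : ℕ} (hp : p ∈ pIoc a b) : a < p ∧ p ≤ b :=
  Finset.mem_Ioc.1 (Finset.mem_filter.1 hp).1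

lemma pIoc_mono {a b b' : ℕ} (h : b ≤ b') : pIoc a b ⊆ pIoc a b' := by
  intro p hp
  rw [pIoc, Finset.mem_filter, Finset.mem_Ioc] at hp ⊢
  exact ⟨⟨hp.1.1, hp.1.2.trans h⟩, hp.2⟩

theorem crt (c : ℕ → ℤ) : ∀ (s : Finset ℕ), (∀ p ∈ s, Nat.Prime p) →
    ∃ z : ℤ, ∀ q ∈ s, (q : ℤ) ∣ z - c q := by
  intro s
  induction s using Finset.induction_on with
  | empty => exact fun _ => ⟨0, by simp⟩
  | @insert p s hps ih =>
    intro hprime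
    obtain ⟨z', hz'⟩ := ih fun q hq => hprime q (mem_insert_of_mem hq)
    have hp : p.Prime := hprime p (mem_insert_self p s)
    set M : ℤ := ∏ q ∈ s, (q : ℤ) with hM
    have hcop : IsCoprime (p : ℤ) M := by
      rw [hM]
      apply IsCoprime.prod_right
      intro q hq
      have hq' : Nat.Prime q := hprime q (mem_insert_of_mem hq)
      have hne : p ≠ q := by rintro rfl; exact hps hq
      rw [Int.isCoprime_iff_gcd_eq_one, Int.gcd_natCast_natCast]
      exact (Nat.coprime_primes hp hq').mpr hne
    obtain ⟨u, v, huv⟩ := hcop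
    refine ⟨c p * (v * M) + z' * (u * p), fun q hq => ?_⟩
    rcases mem_insert.mp hq with rfl | hq
    · exact ⟨u * (z' - c q), by linear_combination (c q) * huv⟩
    · have hqM : (q : ℤ) ∣ M := hM ▸ Finset.dvd_prod_of_mem _ hq
      have h2 : M ∣ (c p * (v * M) + z' * (u * p)) - z' :=
        ⟨v * (c p - z'), by linear_combination z' * huv⟩
      have := dvd_add (hqM.trans h2) (hz' q hq)
      rwa [sub_add_sub_cancel] at this

theorem totient_prod_primes : ∀ (s : Finset ℕ), (∀ p ∈ s, Nat.Prime p) →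
    Nat.totient (∏ p ∈ s, p) = ∏ p ∈ s, (p - 1) := by
  intro s
  induction s using Finset.induction_on with
  | empty => simp
  | @insert p s hps ih =>
    intro hprime
    have hp : p.Prime := hprime p (mem_insert_self p s)
    have hcop : Nat.Coprime p (∏ q ∈ s, q) :=
      Nat.Coprime.prod_right fun q hq => by
        have hq' : Nat.Prime q := hprime q (mem_insert_of_mem hq)
        have hne : p ≠ q := by rintro rfl; exact hps hq
        exact (Nat.coprime_primes hp hq').mpr hne
    rw [Finset.prod_insert hps, Finset.prod_insert hps, Nat.totient_mul hcop,
      Nat.totient_prime hp, ih fun q hq => hprime q (mem_insert_of_mem hq)]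

/-- many primes in `(a, b]` for suitable `b` -/
lemma exists_card_primes (a k : ℕ) : ∃ b, a < b ∧ k ≤ (pIoc a b).card := by
  induction k with
  | zero => exact ⟨a + 1, Nat.lt_succ_self a, Nat.zero_le _⟩
  | succ k ih =>
    obtain ⟨b, hab, hk⟩ := ih
    obtain ⟨p, hpb, hp⟩ := Nat.exists_infinite_primes (b + 1)
    refine ⟨p, hab.trans_le (by omega), ?_⟩
    have hsub : insert p (pIoc a b) ⊆ pIoc a p := by
      intro q hq
      rcases Finset.mem_insert.mp hq with rfl | hq
      · exact Finset.mem_filter.mpr ⟨Finset.mem_Ioc.mpr ⟨by omega, le_rfl⟩, hp⟩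
      · exact pIoc_mono (by omega) hq
    have hnot : p ∉ pIoc a b := fun h => by
      have := (pIoc_bounds h).2; omega
    calc k + 1 ≤ (insert p (pIoc a b)).card := by
          rw [Finset.card_insert_of_notMem hnot]; omega
      _ ≤ (pIoc a p).card := Finset.card_le_card hsub

/-- divergence of prime reciprocals in the tail -/
lemma exists_sum_ge (a b₀ : ℕ) : ∃ b, b₀ ≤ b ∧ 1 ≤ ∑ p ∈ pIoc a b, (1 : ℝ) / p := by
  set g : ℕ → ℝ := Set.indicator {p | Nat.Prime p} (fun n : ℕ => (1 : ℝ) / n) with hg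
  have hg0 : ∀ n, 0 ≤ g n := fun n =>
    Set.indicator_nonneg (fun p _ => by positivity) n
  have hdiv : Tendsto (fun n => ∑ i ∈ Finset.range n, g i) atTop atTop :=
    (not_summable_iff_tendsto_nat_atTop_of_nonneg hg0).mp not_summable_one_div_on_primes
  -- pick n with partial sum big
  have h2 : ∀ᶠ n in atTop, (∑ i ∈ Finset.range (a + 1), g i) + 1 ≤ ∑ i ∈ Finset.range n, g i :=
    hdiv.eventually_ge_atTop _
  obtain ⟨n, hn⟩ := (h2.and (eventually_ge_atTop (max (a + 1) (b₀ + 1)))).exists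
  refine ⟨n, by omega, ?_⟩
  have hsplit : Finset.range n = Finset.range (a + 1) ∪ Finset.Ioc a (n - 1) := by
    ext x
    simp only [Finset.mem_union, Finset.mem_range, Finset.mem_Ioc]
    omega
  have hdisj : Disjoint (Finset.range (a + 1)) (Finset.Ioc a (n - 1)) := by
    rw [Finset.disjoint_left]
    intro x hx hx'
    simp only [Finset.mem_range] at hx
    have := (Finset.mem_Ioc.mp hx').1
    omega
  have hsum : ∑ i ∈ Finset.range n, g i
      = (∑ i ∈ Finset.range (a + 1), g i) + ∑ i ∈ Finset.Ioc a (n - 1), g i := by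
    rw [hsplit, Finset.sum_union hdisj]
  have h3 : (1 : ℝ) ≤ ∑ i ∈ Finset.Ioc a (n - 1), g i := by
    have := hn.1; rw [hsum] at this; linarith
  have h4 : ∑ i ∈ Finset.Ioc a (n - 1), g i = ∑ p ∈ pIoc a (n - 1), (1 : ℝ) / p := by
    rw [hg, Finset.sum_indicator_eq_sum_filter]
    rfl
  refine le_trans (h4 ▸ h3) ?_
  apply Finset.sum_le_sum_of_subset_of_nonneg (pIoc_mono (by omega))
  intro p hp _
  positivity

/-- key quantitative inequality on an interval of primes with reciprocal sum at least 1 -/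
lemma prod_pred_le_half {s : Finset ℕ} (hs : ∀ p ∈ s, Nat.Prime p)
    (hsum : 1 ≤ ∑ p ∈ s, (1 : ℝ) / p) :
    2 * ∏ p ∈ s, (p - 1) ≤ ∏ p ∈ s, p := by
  have hp2 : ∀ p ∈ s, 2 ≤ p := fun p hp => (hs p hp).two_le
  -- real versions
  have hcast : ((∏ p ∈ s, (p - 1) : ℕ) : ℝ) = ∏ p ∈ s, ((p : ℝ) - 1) := by
    rw [Nat.cast_prod]
    refine Finset.prod_congr rfl fun p hp => ?_
    have := hp2 p hp
    push_cast [Nat.cast_sub (by omega : 1 ≤ p)]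
    ring
  have key : (2 : ℝ) * ∏ p ∈ s, ((p : ℝ) - 1) ≤ ∏ p ∈ s, (p : ℝ) := by
    have hprod_pos : (0 : ℝ) < ∏ p ∈ s, (p : ℝ) :=
      Finset.prod_pos fun p hp => by have := hp2 p hp; positivity
    have hfact : ∀ p ∈ s, ((p : ℝ) - 1) = (p : ℝ) * (1 - 1 / p) := by
      intro p hp
      have hppos : (0 : ℝ) < p := by have := hp2 p hp; positivity
      field_simp
    rw [Finset.prod_congr rfl hfact, Finset.prod_mul_distrib]
    have hexp : ∏ p ∈ s, (1 - 1 / (p : ℝ)) ≤ Real.exp (-∑ p ∈ s, (1 : ℝ) / p) := by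
      rw [← Finset.sum_neg_distrib, Real.exp_sum]
      apply Finset.prod_le_prod
      · intro p hp
        have := hp2 p hp
        have h1 : (1 : ℝ) / p ≤ 1 / 2 := by
          apply div_le_div_of_nonneg_left <;> norm_num
          exact_mod_cast this
        linarith
      · intro p hp
        have := Real.add_one_le_exp (-(1 / (p : ℝ)))
        linarith
    have hhalf : Real.exp (-∑ p ∈ s, (1 : ℝ) / p) ≤ 1 / 2 := by
      have h1 : Real.exp (-∑ p ∈ s, (1 : ℝ) / p) ≤ Real.exp (-1) := by
        apply Real.exp_le_exp.mpr; linarith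
      have h2 : Real.exp (-1 : ℝ) ≤ 1 / 2 := by
        rw [Real.exp_neg]
        have h3 : (2 : ℝ) ≤ Real.exp 1 := by
          have := Real.add_one_le_exp (1 : ℝ); linarith
        have h4 : (Real.exp 1)⁻¹ ≤ (2 : ℝ)⁻¹ := by
          apply inv_anti₀ (by norm_num) h3
        linarith
      linarith
    calc (2 : ℝ) * ((∏ p ∈ s, (p : ℝ)) * ∏ p ∈ s, (1 - 1 / (p : ℝ)))
        ≤ 2 * ((∏ p ∈ s, (p : ℝ)) * (1 / 2)) := by
          apply mul_le_mul_of_nonneg_left ?_ (by norm_num)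
          apply mul_le_mul_of_nonneg_left (hexp.trans hhalf) hprod_pos.le
      _ = ∏ p ∈ s, (p : ℝ) := by ring
  have final : ((2 * ∏ p ∈ s, (p - 1) : ℕ) : ℝ) ≤ ((∏ p ∈ s, p : ℕ) : ℝ) := by
    rw [Nat.cast_mul, hcast, Nat.cast_prod]
    exact_mod_cast key
  exact_mod_cast final

lemma exists_b (a k : ℕ) : ∃ b, a < b ∧ k ≤ (pIoc a b).card ∧
    2 * ∏ p ∈ pIoc a b, (p - 1) ≤ ∏ p ∈ pIoc a b, p := by
  obtain ⟨b₁, hab₁, hcard⟩ := exists_card_primes a k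
  obtain ⟨b, hb₁b, hsum⟩ := exists_sum_ge a b₁
  exact ⟨b, hab₁.trans_le hb₁b, hcard.trans (Finset.card_le_card (pIoc_mono hb₁b)),
    prod_pred_le_half (fun p hp => pIoc_prime hp) hsum⟩

/-- the primorial of `b`. -/
def primor (b : ℕ) : ℕ := ∏ p ∈ (Finset.range (b + 1)).filter Nat.Prime, p

lemma primor_pos (b : ℕ) : 0 < primor b :=
  Finset.prod_pos fun p hp => (Finset.mem_filter.1 hp).2.pos

lemma dvd_primor {p b : ℕ} (hp : p.Prime) (hpb : p ≤ b) : p ∣ primor b :=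
  Finset.dvd_prod_of_mem _ (Finset.mem_filter.mpr ⟨Finset.mem_range.mpr (by omega), hp⟩)

section Main

variable (f : ℕ → ℕ) (hf : Tendsto (fun n : ℕ => (f n : ℝ) / n) atTop (nhds 0))

lemma exists_thr (hf : Tendsto (fun n : ℕ => (f n : ℝ) / n) atTop (nhds 0)) (P : ℕ) :
    ∃ N : ℕ, ∀ n, N ≤ n → (f n : ℝ) / n < 1 / (P + 1) := by
  have hpos : (0 : ℝ) < 1 / (P + 1) := by positivity
  have h := hf.eventually (gt_mem_nhds hpos)
  exact eventually_atTop.mp h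

noncomputable def Nthr (P : ℕ) : ℕ := (exists_thr f hf P).choose

lemma Nthr_spec (P : ℕ) : ∀ n, Nthr f hf P ≤ n → (f n : ℝ) / n < 1 / (P + 1) :=
  (exists_thr f hf P).choose_spec

noncomputable def bCh (a k : ℕ) : ℕ := (exists_b a k).choose

lemma bCh_spec (a k : ℕ) : a < bCh a k ∧ k ≤ (pIoc a (bCh a k)).card ∧
    2 * ∏ p ∈ pIoc a (bCh a k), (p - 1) ≤ ∏ p ∈ pIoc a (bCh a k), p :=
  (exists_b a k).choose_spec

noncomputable def aSeq : ℕ → ℕ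
  | 0 => 1
  | k + 1 =>
      2 * primor (bCh (aSeq k) k) + bCh (aSeq k) k
        + Nthr f hf (primor (bCh (aSeq k) k)) + 1

noncomputable def bSeq (k : ℕ) : ℕ := bCh (aSeq f hf k) k

lemma aSeq_succ (k : ℕ) : aSeq f hf (k + 1)
    = 2 * primor (bSeq f hf k) + bSeq f hf k + Nthr f hf (primor (bSeq f hf k)) + 1 := rfl

noncomputable def PF (k : ℕ) : Finset ℕ := pIoc (aSeq f hf k) (bSeq f hf k)

def Bset : Set ℕ := {p | ∃ k, p ∈ PF f hf k}

lemma a_lt_b (k : ℕ) : aSeq f hf k < bSeq f hf k := (bCh_spec _ k).1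

lemma card_PF (k : ℕ) : k ≤ (PF f hf k).card := (bCh_spec _ k).2.1

lemma prod_PF (k : ℕ) :
    2 * ∏ p ∈ PF f hf k, (p - 1) ≤ ∏ p ∈ PF f hf k, p := (bCh_spec _ k).2.2

lemma b_lt_a_succ (k : ℕ) : bSeq f hf k < aSeq f hf (k + 1) := by
  rw [aSeq_succ]; omega

lemma aSeq_lt_succ (k : ℕ) : aSeq f hf k < aSeq f hf (k + 1) :=
  lt_trans (a_lt_b f hf k) (b_lt_a_succ f hf k)

lemma aSeq_mono : Monotone (aSeq f hf) :=
  monotone_nat_of_le_succ fun n => (aSeq_lt_succ f hf n).le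

lemma a_ge (k : ℕ) : k + 1 ≤ aSeq f hf k := by
  induction k with
  | zero => simp [aSeq]
  | succ n ih =>
    have h2 := a_lt_b f hf n
    have h3 := b_lt_a_succ f hf n
    omega

lemma Bset_primes : Bset f hf ⊆ {p : ℕ | p.Prime} := by
  rintro p ⟨k, hk⟩
  exact pIoc_prime hk

lemma B_mem_prime {p : ℕ} (hp : p ∈ Bset f hf) : p.Prime := Bset_primes f hf hp

lemma b_mono {k k' : ℕ} (h : k ≤ k') : bSeq f hf k ≤ bSeq f hf k' := by
  rcases Nat.eq_or_lt_of_le h with rfl | h'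
  · exact le_rfl
  · have h1 := b_lt_a_succ f hf k
    have h2 := aSeq_mono f hf (show k + 1 ≤ k' by omega)
    have h3 := a_lt_b f hf k'
    omega

/-- gap property: an element of `B` larger than `bSeq k` is larger than `aSeq (k+1)`. -/
lemma B_gap {p k : ℕ} (hp : p ∈ Bset f hf) (h : bSeq f hf k < p) :
    aSeq f hf (k + 1) < p := by
  obtain ⟨k', hk'⟩ := hp
  have hb := pIoc_bounds hk'
  rcases Nat.lt_or_ge k' (k + 1) with h' | h'
  · have := b_mono f hf (show k' ≤ k by omega)
    omega
  · have := aSeq_mono f hf h'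
    omega

/-- The realization theorem: every admissible pattern occurs. -/
theorem realize (L : ℕ) (A : Set ℕ) (hA : A ⊆ Set.Icc 1 L)
    (hadm : IsAdmissible (Bset f hf) ((fun m : ℕ => (m : ℤ)) '' A)) :
    ∃ n : ℕ, 1 ≤ n ∧ ∀ j ∈ Set.Icc 1 L, (n + j ∈ FreeSet (Bset f hf) ↔ j ∈ A) := by
  classical
  set a := aSeq f hf L with ha
  set b := bSeq f hf L with hb
  -- the non-pattern positions
  set D : Finset ℕ := (Finset.Icc 1 L).filter (fun j => j ∉ A) with hD
  -- injection of D into the primes of the L-th block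
  have hcardD : D.card ≤ (PF f hf L).card := by
    calc D.card ≤ (Finset.Icc 1 L).card := Finset.card_filter_le _ _
      _ = L := by rw [Nat.card_Icc]; omega
      _ ≤ (PF f hf L).card := card_PF f hf L
  obtain ⟨e⟩ : Nonempty (↥D ↪ ↥(PF f hf L)) := by
    apply Function.Embedding.nonempty_of_card_le
    simpa [Fintype.card_coe] using hcardD
  set ι : ℕ → ℕ := fun j => if h : j ∈ D then (e ⟨j, h⟩ : ℕ) else 0 with hι
  have hι_mem : ∀ j (h : j ∈ D), ι j ∈ PF f hf L := by
    intro j h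
    simp only [hι, dif_pos h]
    exact (e ⟨j, h⟩).2
  have hι_inj : ∀ j ∈ D, ∀ j' ∈ D, ι j = ι j' → j = j' := by
    intro j hj j' hj' hjj'
    simp only [hι, dif_pos hj, dif_pos hj'] at hjj'
    have := e.injective (Subtype.ext hjj')
    exact congrArg Subtype.val this
  -- the moduli
  set Q : Finset ℕ := (Finset.range (b + 1)).filter (fun q => q ∈ Bset f hf) with hQ
  have hQ_prime : ∀ q ∈ Q, Nat.Prime q := fun q hq =>
    B_mem_prime f hf (Finset.mem_filter.1 hq).2
  have hQ_B : ∀ q ∈ Q, q ∈ Bset f hf := fun q hq => (Finset.mem_filter.1 hq).2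
  have hPF_Q : ∀ p ∈ PF f hf L, p ∈ Q := by
    intro p hp
    refine Finset.mem_filter.mpr ⟨Finset.mem_range.mpr ?_, ⟨L, hp⟩⟩
    have := (pIoc_bounds hp).2
    omega
  -- the residues from admissibility
  set r : ℕ → ℤ := fun q => if h : q ∈ Bset f hf then (hadm q h).choose else 0 with hr
  have hr_spec : ∀ q (h : q ∈ Bset f hf), ∀ j ∈ A, ¬ ((q : ℤ) ∣ (j : ℤ) - r q) := by
    intro q h j hj
    have := (hadm q h).choose_spec ((j : ℕ) : ℤ) ⟨j, hj, rfl⟩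
    simpa [hr, dif_pos h] using this
  -- the target residues
  set c : ℕ → ℤ := fun q =>
    if h : ∃ j, j ∈ D ∧ ι j = q then -(h.choose : ℤ) else -(r q) with hc
  -- solve the congruences
  obtain ⟨z, hz⟩ := crt c Q hQ_prime
  set M : ℕ := ∏ q ∈ Q, q with hM
  have hM_pos : 0 < M := Finset.prod_pos fun q hq => (hQ_prime q hq).pos
  have hM_dvd : M ∣ primor b := by
    apply Finset.prod_dvd_prod_of_subset
    intro q hq
    exact Finset.mem_filter.mpr ⟨(Finset.mem_filter.1 hq).1, hQ_prime q hq⟩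
  have hM_le : M ≤ primor b := Nat.le_of_dvd (primor_pos b) hM_dvd
  -- the shift n
  set N : ℕ := (z % (M : ℤ) + M).toNat with hN
  have hmod_nonneg : 0 ≤ z % (M : ℤ) := Int.emod_nonneg z (by exact_mod_cast hM_pos.ne')
  have hmod_lt : z % (M : ℤ) < M := Int.emod_lt_of_pos z (by exact_mod_cast hM_pos)
  have hN_cast : (N : ℤ) = z % (M : ℤ) + M := by
    rw [hN]; exact Int.toNat_of_nonneg (by omega)
  have hN_ge : M ≤ N := by
    have : (M : ℤ) ≤ (N : ℤ) := by omega
    exact_mod_cast this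
  have hN_lt : N < 2 * M := by
    have : (N : ℤ) < 2 * M := by omega
    exact_mod_cast this
  have hN_pos : 1 ≤ N := le_trans hM_pos hN_ge
  -- congruences for N
  have hN_cong : ∀ q ∈ Q, (q : ℤ) ∣ (N : ℤ) - c q := by
    intro q hq
    have h1 : (q : ℤ) ∣ (M : ℤ) := Int.natCast_dvd_natCast.mpr (Finset.dvd_prod_of_mem _ hq)
    have h2 : (M : ℤ) ∣ (N : ℤ) - z := by
      rw [hN_cast]
      have : z % (M : ℤ) = z - M * (z / M) := Int.emod_def z M
      rw [this]
      exact ⟨1 - z / M, by ring⟩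
    have := dvd_add (h1.trans h2) (hz q hq)
    rwa [sub_add_sub_cancel] at this
  refine ⟨N, hN_pos, ?_⟩
  intro j hj
  obtain ⟨hj1, hjL⟩ := hj
  by_cases hjA : j ∈ A
  · simp only [hjA, iff_true]
    refine ⟨by omega, ?_⟩
    intro p hpB hpdvd
    have hp : p.Prime := B_mem_prime f hf hpB
    have hpdvd' : (p : ℤ) ∣ (N : ℤ) + j := by exact_mod_cast hpdvd
    by_cases hple : p ≤ b
    · -- p is one of the moduli
      have hpQ : p ∈ Q := Finset.mem_filter.mpr ⟨Finset.mem_range.mpr (by omega), hpB⟩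
      have h3 : (p : ℤ) ∣ (j : ℤ) + c p := by
        have h := dvd_sub hpdvd' (hN_cong p hpQ)
        have e : (N : ℤ) + j - ((N : ℤ) - c p) = (j : ℤ) + c p := by ring
        rwa [e] at h
      by_cases hex : ∃ j', j' ∈ D ∧ ι j' = p
      · -- p is a designated prime p_{j₀}
        obtain ⟨hj₀D, hj₀ι⟩ := hex.choose_spec
        set j₀ := hex.choose with hj₀
        have hcp : c p = -(j₀ : ℤ) := by rw [hc]; exact dif_pos hex
        rw [hcp] at h3
        have h4 : (p : ℤ) ∣ (j : ℤ) - j₀ := by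
          have e : (j : ℤ) + -(j₀ : ℤ) = (j : ℤ) - j₀ := by ring
          rwa [e] at h3
        have hj₀mem : j₀ ∈ Finset.Icc 1 L ∧ j₀ ∉ A := by
          have := Finset.mem_filter.1 hj₀D; exact ⟨this.1, this.2⟩
        have hne : j ≠ j₀ := fun h => hj₀mem.2 (h ▸ hjA)
        have hpa : a < p := by
          have := (pIoc_bounds (hj₀ι ▸ hι_mem j₀ hj₀D)).1
          exact this
        have hbig : (L : ℤ) + 1 ≤ p := by
          have := a_ge f hf L
          have : L + 1 ≤ a := this
          omega
        have hj₀L : j₀ ≤ L := (Finset.mem_Icc.1 hj₀mem.1).2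
        have hj₀1 : 1 ≤ j₀ := (Finset.mem_Icc.1 hj₀mem.1).1
        have : (j : ℤ) - j₀ = 0 := by
          apply Int.eq_zero_of_abs_lt_dvd h4
          rw [abs_lt]
          constructor <;> [omega; omega]
        have : j = j₀ := by omega
        exact hne this
      · -- p uses an admissibility residue
        have hcp : c p = -(r p) := by rw [hc]; exact dif_neg hex
        rw [hcp] at h3
        have h4 : (p : ℤ) ∣ (j : ℤ) - r p := by
          have e : (j : ℤ) + -(r p) = (j : ℤ) - r p := by ring
          rwa [e] at h3
        exact hr_spec p hpB j hjA h4
    · -- p is a large prime, beyond the next block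
      have hgap : aSeq f hf (L + 1) < p := B_gap f hf hpB (by omega)
      have hple' : p ≤ N + j := Nat.le_of_dvd (by omega) hpdvd
      have hNb : N < 2 * primor b := lt_of_lt_of_le hN_lt (by omega)
      have hLb : L < b := by
        have h1 := a_ge f hf L
        have h2 := a_lt_b f hf L
        omega
      have haseq := aSeq_succ f hf L
      rw [← hb] at haseq
      omega
  · -- j ∉ A : the designated prime divides N + j
    simp only [hjA, iff_false]
    intro hfree
    have hjD : j ∈ D := Finset.mem_filter.mpr ⟨Finset.mem_Icc.mpr ⟨hj1, hjL⟩, hjA⟩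
    set p : ℕ := ι j with hp
    have hpPF : p ∈ PF f hf L := hι_mem j hjD
    have hpB : p ∈ Bset f hf := ⟨L, hpPF⟩
    have hpQ : p ∈ Q := hPF_Q p hpPF
    have hex : ∃ j', j' ∈ D ∧ ι j' = p := ⟨j, hjD, rfl⟩
    have hj₀ : hex.choose = j := by
      obtain ⟨hj₀D, hj₀ι⟩ := hex.choose_spec
      exact hι_inj _ hj₀D j hjD hj₀ι
    have hcp : c p = -(j : ℤ) := by
      have h1 : c p = -(hex.choose : ℤ) := dif_pos hex
      rw [h1, hj₀]
    have hdvd : (p : ℤ) ∣ (N : ℤ) + j := by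
      have := hN_cong p hpQ
      rw [hcp] at this
      have e : (N : ℤ) - -(j : ℤ) = (N : ℤ) + j := by ring
      rwa [e] at this
    have hdvd' : p ∣ N + j := by exact_mod_cast hdvd
    exact hfree.2 p hpB hdvd'

lemma PF_prime {k p : ℕ} (hp : p ∈ PF f hf k) : p.Prime := pIoc_prime hp

lemma PF_disjoint {k k' : ℕ} (h : k ≠ k') : Disjoint (PF f hf k) (PF f hf k') := by
  wlog hlt : k < k' generalizing k k'
  · exact (this h.symm (by omega)).symm
  rw [Finset.disjoint_left]
  intro p hp hp'
  have h1 := (pIoc_bounds hp).2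
  have h2 := (pIoc_bounds hp').1
  have h3 : bSeq f hf k < aSeq f hf k' :=
    lt_of_lt_of_le (b_lt_a_succ f hf k) (aSeq_mono f hf (by omega : k + 1 ≤ k'))
  omega

/-- the union of the first `t+1` blocks of primes -/
noncomputable def UB (t : ℕ) : Finset ℕ := (Finset.range (t + 1)).biUnion (PF f hf)

lemma UB_prime {t p : ℕ} (hp : p ∈ UB f hf t) : p.Prime := by
  obtain ⟨k, _, hk⟩ := Finset.mem_biUnion.1 hp
  exact PF_prime f hf hk

lemma UB_B {t p : ℕ} (hp : p ∈ UB f hf t) : p ∈ Bset f hf := by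
  obtain ⟨k, _, hk⟩ := Finset.mem_biUnion.1 hp
  exact ⟨k, hk⟩

noncomputable def mUB (t : ℕ) : ℕ := ∏ p ∈ UB f hf t, p

lemma mUB_pos (t : ℕ) : 0 < mUB f hf t :=
  Finset.prod_pos fun p hp => (UB_prime f hf hp).pos

lemma pow_totient_le (t : ℕ) : 2 ^ (t + 1) * Nat.totient (mUB f hf t) ≤ mUB f hf t := by
  have hdisj : ∀ k ∈ Finset.range (t + 1), ∀ k' ∈ Finset.range (t + 1), k ≠ k' →
      Disjoint (PF f hf k) (PF f hf k') := fun k _ k' _ h => PF_disjoint f hf h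
  have htot : Nat.totient (mUB f hf t) = ∏ p ∈ UB f hf t, (p - 1) :=
    totient_prod_primes _ fun p hp => UB_prime f hf hp
  rw [htot, mUB, UB, Finset.prod_biUnion hdisj, Finset.prod_biUnion hdisj]
  have h2 : (2 : ℕ) ^ (t + 1) = ∏ _k ∈ Finset.range (t + 1), 2 := by
    rw [Finset.prod_const, Finset.card_range]
  rw [h2, ← Finset.prod_mul_distrib]
  exact Finset.prod_le_prod' fun k _ => prod_PF f hf k

lemma count_bound (t N : ℕ) :
    (FreeSet (Bset f hf) ∩ Set.Icc 1 N).ncard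
      ≤ Nat.totient (mUB f hf t) * (N / mUB f hf t + 1) := by
  classical
  set m := mUB f hf t with hm
  have hset : FreeSet (Bset f hf) ∩ Set.Icc 1 N
      = ↑((Finset.Icc 1 N).filter (fun x => x ∈ FreeSet (Bset f hf))) := by
    ext x
    simp only [Set.mem_inter_iff, Finset.coe_filter, Set.mem_setOf_eq, Finset.mem_Icc,
      Set.mem_Icc]
    tauto
  rw [hset, Set.ncard_coe_finset]
  have hsub : (Finset.Icc 1 N).filter (fun x => x ∈ FreeSet (Bset f hf))
      ⊆ (Finset.Ico 1 (1 + N)).filter (fun x => m.Coprime x) := by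
    intro x hx
    obtain ⟨hx1, hx2⟩ := Finset.mem_filter.1 hx
    rw [Finset.mem_Icc] at hx1
    refine Finset.mem_filter.mpr ⟨Finset.mem_Ico.mpr ⟨hx1.1, by omega⟩, ?_⟩
    by_contra hnc
    obtain ⟨p, hp, hpm, hpx⟩ := Nat.Prime.not_coprime_iff_dvd.mp hnc
    have hpU : p ∈ UB f hf t := by
      obtain ⟨q, hq, hpq⟩ := hp.prime.exists_mem_finset_dvd hpm
      have : p = q := ((Nat.prime_dvd_prime_iff_eq hp (UB_prime f hf hq)).mp hpq)
      exact this ▸ hq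
    exact hx2.2 p (UB_B f hf hpU) hpx
  calc ((Finset.Icc 1 N).filter (fun x => x ∈ FreeSet (Bset f hf))).card
      ≤ ((Finset.Ico 1 (1 + N)).filter (fun x => m.Coprime x)).card :=
        Finset.card_le_card hsub
    _ ≤ Nat.totient m * (N / m + 1) := Nat.Ico_filter_coprime_le 1 N (mUB_pos f hf t).ne'

/-- the `B`-free integers have density zero. -/
theorem behrend :
    Tendsto (fun N : ℕ => ((FreeSet (Bset f hf) ∩ Set.Icc 1 N).ncard : ℝ) / N)
      atTop (nhds 0) := by
  rw [Metric.tendsto_atTop]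
  intro ε hε
  -- choose the number of blocks
  obtain ⟨t, ht⟩ : ∃ t : ℕ, ((1 : ℝ) / 2) ^ (t + 1) < ε / 2 := by
    obtain ⟨t, ht⟩ := exists_pow_lt_of_lt_one (half_pos hε) (by norm_num : (1 : ℝ) / 2 < 1)
    exact ⟨t, lt_of_le_of_lt (pow_le_pow_of_le_one (by norm_num) (by norm_num) (by omega)) ht⟩
  set m := mUB f hf t with hm
  have hm_pos : 0 < m := mUB_pos f hf t
  set φ := Nat.totient m with hφ
  have hφ_pos : 0 < φ := Nat.totient_pos.mpr hm_pos
  obtain ⟨N₁, hN₁⟩ : ∃ N₁ : ℕ, 2 * (φ : ℝ) / ε < N₁ := exists_nat_gt _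
  refine ⟨max 1 N₁, fun N hN => ?_⟩
  have hN1 : 1 ≤ N := le_trans (le_max_left _ _) hN
  have hNN₁ : (N₁ : ℝ) ≤ N := Nat.cast_le.mpr (le_trans (le_max_right _ _) hN)
  have hNpos : (0 : ℝ) < N := by exact_mod_cast hN1
  rw [Real.dist_eq, sub_zero, abs_of_nonneg (by positivity)]
  -- the count bound
  have hcount : ((FreeSet (Bset f hf) ∩ Set.Icc 1 N).ncard : ℝ) ≤ φ * ((N / m : ℕ) + 1) := by
    exact_mod_cast Nat.cast_le.mpr (count_bound f hf t N)
  have hdivle : ((N / m : ℕ) : ℝ) ≤ (N : ℝ) / m := Nat.cast_div_le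
  have h1 : ((FreeSet (Bset f hf) ∩ Set.Icc 1 N).ncard : ℝ) / N
      ≤ (φ : ℝ) / m + (φ : ℝ) / N := by
    have : ((FreeSet (Bset f hf) ∩ Set.Icc 1 N).ncard : ℝ)
        ≤ (φ : ℝ) * ((N : ℝ) / m) + φ := by
      calc ((FreeSet (Bset f hf) ∩ Set.Icc 1 N).ncard : ℝ)
          ≤ φ * ((N / m : ℕ) + 1) := hcount
        _ ≤ (φ : ℝ) * ((N : ℝ) / m) + φ := by
            rw [mul_add, mul_one]
            have := mul_le_mul_of_nonneg_left hdivle (by positivity : (0:ℝ) ≤ (φ:ℝ))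
            linarith
    rw [div_le_iff₀ hNpos]
    have hm0 : (m : ℝ) ≠ 0 := by
      have : (0:ℝ) < m := by exact_mod_cast hm_pos
      linarith
    have e1 : (φ : ℝ) * ((N : ℝ) / m) + φ = ((φ : ℝ) / m + (φ : ℝ) / N) * N := by
      field_simp
    exact this.trans (le_of_eq e1)
  -- bound the two terms
  have hterm1 : (φ : ℝ) / m < ε / 2 := by
    have hkey : (2 : ℝ) ^ (t + 1) * φ ≤ m := by exact_mod_cast pow_totient_le f hf t
    have hmpos : (0 : ℝ) < m := by exact_mod_cast hm_pos
    rw [div_lt_iff₀ hmpos]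
    have hone : ((1:ℝ)/2)^(t+1) * (2:ℝ)^(t+1) = 1 := by
      rw [← mul_pow]; norm_num
    calc (φ : ℝ) = ((1:ℝ)/2)^(t+1) * ((2:ℝ)^(t+1) * φ) := by
          rw [← mul_assoc, hone, one_mul]
      _ ≤ ((1:ℝ)/2)^(t+1) * m := by
          apply mul_le_mul_of_nonneg_left hkey (by positivity)
      _ < ε / 2 * m := by
          apply mul_lt_mul_of_pos_right ht hmpos
  have hterm2 : (φ : ℝ) / N < ε / 2 := by
    rw [div_lt_iff₀ hNpos]
    have h2 : 2 * (φ : ℝ) / ε < N := lt_of_lt_of_le hN₁ hNN₁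
    rw [div_lt_iff₀ hε] at h2
    linarith
  linarith
/-- a missed residue class exists modulo a prime exceeding the cardinality -/
lemma exists_missed {p : ℕ} (hp : p.Prime) (S : Finset ℕ) (hcard : S.card < p) :
    ∃ r : ℤ, ∀ a ∈ S, ¬ ((p : ℤ) ∣ (a : ℤ) - r) := by
  classical
  haveI : NeZero p := ⟨hp.pos.ne'⟩
  have hTcard : (S.image (fun a : ℕ => (a : ZMod p))).card < Fintype.card (ZMod p) := by
    rw [ZMod.card]
    have h1 : (S.image (fun a : ℕ => (a : ZMod p))).card ≤ S.card := Finset.card_image_le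
    omega
  obtain ⟨x, hx⟩ : ∃ x : ZMod p, x ∉ S.image (fun a : ℕ => (a : ZMod p)) := by
    by_contra h
    push_neg at h
    have : S.image (fun a : ℕ => (a : ZMod p)) = Finset.univ := Finset.eq_univ_iff_forall.mpr h
    rw [this, Finset.card_univ] at hTcard
    omega
  refine ⟨(x.val : ℤ), fun a ha hdvd => hx ?_⟩
  have h0 := (ZMod.intCast_zmod_eq_zero_iff_dvd ((a : ℤ) - (x.val : ℤ)) p).mpr hdvd
  have : ((a : ℕ) : ZMod p) = x := by
    push_cast at h0
    rw [sub_eq_zero] at h0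
    rwa [ZMod.natCast_val, ZMod.cast_id] at h0
  exact Finset.mem_image.mpr ⟨a, ha, this⟩

/-- the complexity lower bound along a subsequence -/
theorem cpx_large (k : ℕ) : ∃ L : ℕ, k ≤ L ∧
    2 ^ (f L) ≤ cpx (fun m => m ∈ FreeSet (Bset f hf)) L := by
  classical
  set b := bSeq f hf k with hb
  set Pi := primor b with hPi
  have hPi_pos : 0 < Pi := primor_pos b
  set m := aSeq f hf (k + 1) - 1 with hm
  have haseq := aSeq_succ f hf k
  rw [← hb, ← hPi] at haseq
  have hm_eq : m = 2 * Pi + b + Nthr f hf Pi := by omega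
  set L := m * Pi with hL
  have hmL : m ≤ L := Nat.le_mul_of_pos_right m hPi_pos
  have hkL : k ≤ L := by
    have h1 := a_ge f hf k
    have h2 := a_lt_b f hf k
    omega
  refine ⟨L, hkL, ?_⟩
  -- bound on f L
  have hfL : f L ≤ m := by
    have hthr : Nthr f hf Pi ≤ L := by omega
    have hspec := Nthr_spec f hf Pi L hthr
    have hLpos : 0 < L := by
      have : 0 < m := by omega
      exact Nat.mul_pos this hPi_pos
    have hLposR : (0 : ℝ) < L := by exact_mod_cast hLpos
    rw [div_lt_div_iff₀ hLposR (by positivity : (0:ℝ) < (Pi : ℝ) + 1)] at hspec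
    -- (f L) * (Pi + 1) < L = m * Pi < m * (Pi + 1)
    have h2 : (L : ℝ) = (m : ℝ) * Pi := by exact_mod_cast congrArg Nat.cast hL
    have h3 : (f L : ℝ) * ((Pi : ℝ) + 1) < (m : ℝ) * ((Pi : ℝ) + 1) := by
      rw [one_mul] at hspec
      nlinarith [hspec, (by exact_mod_cast hPi_pos : (0:ℝ) < (Pi:ℝ)),
        (by positivity : (0:ℝ) ≤ (m:ℝ))]
    have h4 : (f L : ℝ) < m :=
      lt_of_mul_lt_mul_right h3 (by positivity)
    exact_mod_cast (le_of_lt (by exact_mod_cast h4 : (f L : ℕ) < m)).trans le_rfl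
  -- for each subset S of [1, m], the pattern of multiples of Pi indexed by S occurs
  have hrealized : ∀ S ∈ (Finset.Icc 1 m).powerset,
      ∃ n : ℕ, 1 ≤ n ∧ ∀ j ∈ Set.Icc 1 L,
        (n + j ∈ FreeSet (Bset f hf) ↔ j ∈ ((S.image (fun t => t * Pi) : Finset ℕ) : Set ℕ)) := by
    intro S hS
    have hSsub : S ⊆ Finset.Icc 1 m := Finset.mem_powerset.1 hS
    apply realize
    · -- A ⊆ Icc 1 L
      intro x hx
      simp only [Finset.coe_image, Set.mem_image, Finset.mem_coe] at hx
      obtain ⟨t, ht, rfl⟩ := hx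
      have := Finset.mem_Icc.1 (hSsub ht)
      constructor
      · calc 1 ≤ Pi := hPi_pos
          _ ≤ t * Pi := Nat.le_mul_of_pos_left Pi (by omega)
      · exact Nat.mul_le_mul_right Pi this.2
    · -- admissibility
      intro q hq
      have hqp : q.Prime := B_mem_prime f hf hq
      by_cases hqb : q ≤ b
      · -- q divides Pi : residue 1 is missed
        have hqPi : q ∣ Pi := dvd_primor hqp hqb
        refine ⟨1, ?_⟩
        rintro x ⟨y, hy, rfl⟩
        simp only [Finset.coe_image, Set.mem_image, Finset.mem_coe] at hy
        obtain ⟨t, ht, rfl⟩ := hy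
        intro hdvd
        have h1 : (q : ℤ) ∣ ((t * Pi : ℕ) : ℤ) := by
          exact_mod_cast Int.natCast_dvd_natCast.mpr (hqPi.mul_left t)
        have h2 : (q : ℤ) ∣ 1 := by
          have := dvd_sub h1 hdvd
          have e : ((t * Pi : ℕ) : ℤ) - (((t * Pi : ℕ) : ℤ) - 1) = 1 := by ring
          rwa [e] at this
        have := Int.le_of_dvd one_pos h2
        have := hqp.two_le
        omega
      · -- q is a large prime; a residue is missed by cardinality
        have hgap : aSeq f hf (k + 1) < q := B_gap f hf hq (by omega)
        have hcard : (S.image (fun t => t * Pi)).card < q := by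
          calc (S.image (fun t => t * Pi)).card ≤ S.card := Finset.card_image_le
            _ ≤ (Finset.Icc 1 m).card := Finset.card_le_card hSsub
            _ = m := by rw [Nat.card_Icc]; omega
            _ < q := by omega
        obtain ⟨r, hr⟩ := exists_missed hqp (S.image (fun t => t * Pi)) hcard
        refine ⟨r, ?_⟩
        rintro x ⟨y, hy, rfl⟩
        simp only [Finset.coe_image, Set.mem_image, Finset.mem_coe] at hy
        obtain ⟨t, ht, rfl⟩ := hy
        exact hr _ (Finset.mem_image_of_mem _ ht)
  -- build the injection from the powerset into words
  set Y := fun m : ℕ => m ∈ FreeSet (Bset f hf) with hY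
  set W := {w : Fin L → Prop // ∃ n : ℕ, ∀ i : Fin L, w i = Y (n + 1 + i)} with hW
  have hcpx : cpx Y L = Nat.card W := rfl
  -- choice of shifts
  choose nS hnS1 hnS2 using hrealized
  set F : {S // S ∈ (Finset.Icc 1 m).powerset} → W := fun S =>
    ⟨fun i => Y (nS S.1 S.2 + 1 + i), ⟨nS S.1 S.2, fun i => rfl⟩⟩ with hF
  have hF_inj : Function.Injective F := by
    intro S S' hSS'
    have hval : ∀ i : Fin L, Y (nS S.1 S.2 + 1 + i) = Y (nS S'.1 S'.2 + 1 + i) :=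
      fun i => congrFun (congrArg Subtype.val hSS') i
    apply Subtype.ext
    apply Finset.ext
    intro t
    -- key equivalence for t in both directions
    have key : ∀ (T : {S // S ∈ (Finset.Icc 1 m).powerset}) (t : ℕ), t ∈ T.1 →
        (1 ≤ t ∧ t ≤ m) := by
      intro T t ht
      exact Finset.mem_Icc.1 (Finset.mem_powerset.1 T.2 ht)
    constructor
    · intro htS
      obtain ⟨ht1, htm⟩ := key S t htS
      -- index for position t * Pi
      have htL : 1 ≤ t * Pi ∧ t * Pi ≤ L := by
        constructor
        · calc 1 ≤ Pi := hPi_pos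
            _ ≤ t * Pi := Nat.le_mul_of_pos_left Pi (by omega)
        · exact Nat.mul_le_mul_right Pi htm
      set i : Fin L := ⟨t * Pi - 1, by omega⟩ with hi
      have hidx : nS S.1 S.2 + 1 + (i : ℕ) = nS S.1 S.2 + t * Pi := by
        simp only [hi]; omega
      have hidx' : nS S'.1 S'.2 + 1 + (i : ℕ) = nS S'.1 S'.2 + t * Pi := by
        simp only [hi]; omega
      have hmem : t * Pi ∈ ((S.1.image (fun u => u * Pi) : Finset ℕ) : Set ℕ) := by
        simp only [Finset.coe_image, Set.mem_image, Finset.mem_coe]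
        exact ⟨t, htS, rfl⟩
      have h1 : nS S.1 S.2 + t * Pi ∈ FreeSet (Bset f hf) :=
        (hnS2 S.1 S.2 (t * Pi) ⟨htL.1, htL.2⟩).mpr hmem
      have h2 : Y (nS S.1 S.2 + 1 + i) := by rw [hidx]; exact h1
      have h3 : Y (nS S'.1 S'.2 + 1 + i) := (hval i) ▸ h2
      have h4 : nS S'.1 S'.2 + t * Pi ∈ FreeSet (Bset f hf) := by
        rw [hidx'] at h3; exact h3
      have h5 := (hnS2 S'.1 S'.2 (t * Pi) ⟨htL.1, htL.2⟩).mp h4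
      simp only [Finset.coe_image, Set.mem_image, Finset.mem_coe] at h5
      obtain ⟨u, hu, huv⟩ := h5
      have : u = t := Nat.eq_of_mul_eq_mul_right hPi_pos huv
      exact this ▸ hu
    · intro htS'
      obtain ⟨ht1, htm⟩ := key S' t htS'
      have htL : 1 ≤ t * Pi ∧ t * Pi ≤ L := by
        constructor
        · calc 1 ≤ Pi := hPi_pos
            _ ≤ t * Pi := Nat.le_mul_of_pos_left Pi (by omega)
        · exact Nat.mul_le_mul_right Pi htm
      set i : Fin L := ⟨t * Pi - 1, by omega⟩ with hi
      have hidx : nS S.1 S.2 + 1 + (i : ℕ) = nS S.1 S.2 + t * Pi := by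
        simp only [hi]; omega
      have hidx' : nS S'.1 S'.2 + 1 + (i : ℕ) = nS S'.1 S'.2 + t * Pi := by
        simp only [hi]; omega
      have hmem : t * Pi ∈ ((S'.1.image (fun u => u * Pi) : Finset ℕ) : Set ℕ) := by
        simp only [Finset.coe_image, Set.mem_image, Finset.mem_coe]
        exact ⟨t, htS', rfl⟩
      have h1 : nS S'.1 S'.2 + t * Pi ∈ FreeSet (Bset f hf) :=
        (hnS2 S'.1 S'.2 (t * Pi) ⟨htL.1, htL.2⟩).mpr hmem
      have h2 : Y (nS S'.1 S'.2 + 1 + i) := by rw [hidx']; exact h1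
      have h3 : Y (nS S.1 S.2 + 1 + i) := (hval i) ▸ h2
      have h4 : nS S.1 S.2 + t * Pi ∈ FreeSet (Bset f hf) := by
        rw [hidx] at h3; exact h3
      have h5 := (hnS2 S.1 S.2 (t * Pi) ⟨htL.1, htL.2⟩).mp h4
      simp only [Finset.coe_image, Set.mem_image, Finset.mem_coe] at h5
      obtain ⟨u, hu, huv⟩ := h5
      have : u = t := Nat.eq_of_mul_eq_mul_right hPi_pos huv
      exact this ▸ hu
  -- conclude with cardinalities
  have hWfin : Finite W := by
    apply Subtype.finite
  have hcard_le : Nat.card {S // S ∈ (Finset.Icc 1 m).powerset} ≤ Nat.card W :=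
    Nat.card_le_card_of_injective F hF_inj
  have hcard_eq : Nat.card {S // S ∈ (Finset.Icc 1 m).powerset} = 2 ^ m := by
    rw [Nat.card_eq_fintype_card, Fintype.card_coe, Finset.card_powerset, Nat.card_Icc]
    simp
  calc 2 ^ (f L) ≤ 2 ^ m := Nat.pow_le_pow_right (by omega) hfL
    _ = Nat.card {S // S ∈ (Finset.Icc 1 m).powerset} := hcard_eq.symm
    _ ≤ Nat.card W := hcard_le
    _ = cpx Y L := hcpx.symm

end Main

end BehrendAux

/-- For every `ρ : ℕ → ℕ` with `ρ(n)/n` nonincreasing and tending to `0`, there is a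
Behrend set `B` of primes such that every `B`-admissible block appears in the `B`-free
sequence and `limsup cpx(n)/2^(ρ n) ≥ 1`. -/
theorem behrend_set_with_admissible_blocks_and_large_complexity (ρ : ℕ → ℕ)
    (hmono : ∀ m n : ℕ, 1 ≤ m → m ≤ n → (ρ n : ℝ) / n ≤ (ρ m : ℝ) / m)
    (hlim : Tendsto (fun n : ℕ => (ρ n : ℝ) / n) atTop (nhds 0)) :
    ∃ B : Set ℕ, B ⊆ {p : ℕ | p.Prime} ∧
      Tendsto (fun N : ℕ => ((FreeSet B ∩ Set.Icc 1 N).ncard : ℝ) / N) atTop (nhds 0) ∧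
      (∀ L : ℕ, ∀ A : Set ℕ, A ⊆ Set.Icc 1 L →
        IsAdmissible B ((fun m : ℕ => (m : ℤ)) '' A) →
        ∃ n : ℕ, 1 ≤ n ∧ ∀ j ∈ Set.Icc 1 L, (n + j ∈ FreeSet B ↔ j ∈ A)) ∧
      1 ≤ Filter.limsup
        (fun n : ℕ => (cpx (fun m => m ∈ FreeSet B) n : ENNReal) / 2 ^ ρ n) atTop := by
  refine ⟨BehrendAux.Bset ρ hlim, BehrendAux.Bset_primes ρ hlim,
    BehrendAux.behrend ρ hlim,
    fun L A hA hadm => BehrendAux.realize ρ hlim L A hA hadm, ?_⟩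
  rw [Filter.limsup_eq]
  refine le_sInf fun x hx => ?_
  obtain ⟨N₀, hN₀⟩ := Filter.eventually_atTop.mp hx
  obtain ⟨L, hL, hcpx⟩ := BehrendAux.cpx_large ρ hlim N₀
  have h2top : ((2 : ENNReal) ^ ρ L) ≠ ⊤ := by
    exact ENNReal.pow_ne_top (by norm_num)
  have h2zero : ((2 : ENNReal) ^ ρ L) ≠ 0 := by
    exact pow_ne_zero _ (by norm_num)
  have hle : (2 : ENNReal) ^ ρ L
      ≤ (cpx (fun m => m ∈ FreeSet (BehrendAux.Bset ρ hlim)) L : ENNReal) := by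
    have h1 : ((2 ^ ρ L : ℕ) : ENNReal)
        ≤ ((cpx (fun m => m ∈ FreeSet (BehrendAux.Bset ρ hlim)) L : ℕ) : ENNReal) :=
      Nat.cast_le.mpr hcpx
    calc (2 : ENNReal) ^ ρ L = ((2 ^ ρ L : ℕ) : ENNReal) := by push_cast; rfl
      _ ≤ _ := h1
  have h1 : (1 : ENNReal)
      ≤ (cpx (fun m => m ∈ FreeSet (BehrendAux.Bset ρ hlim)) L : ENNReal) / 2 ^ ρ L := by
    rw [ENNReal.le_div_iff_mul_le (Or.inl h2zero) (Or.inl h2top), one_mul]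
    exact hle
  exact le_trans h1 (hN₀ L hL)
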